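/- There exists a constant $c > 0$ such that for all real $x > 0$ and $\lambda \in (0,1)$, $\left| \frac{\lambda x}{\sqrt{1+\lambda^2 x^2}} - \frac{x}{\sqrt{1+x^2}} \right| \geq c \,\frac{x}{\sqrt{1+x^2}\,(1+\lambda^2 x^2)}\,(1 - \lambda^2)$. -/
import Mathlib


theorem stmt3 : ∃ c : ℝ, 0 < c ∧ ∀ x lam : ℝ, 0 < x → 0 < lam → lam < 1 →
    c * (x / (Real.sqrt (1 + x ^ 2) * (1 + lam ^ 2 * x ^ 2)) * (1 - lam ^ 2)) ≤
      |lam * x / Real.sqrt (1 + lam ^ 2 * x ^ 2) - x / Real.sqrt (1 + x ^ 2)| := by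
  refine ⟨1/2, by norm_num, ?_⟩
  intro x lam hx hl hl1
  set a := Real.sqrt (1 + x ^ 2) with ha
  set b := Real.sqrt (1 + lam ^ 2 * x ^ 2) with hb
  have ha2 : a ^ 2 = 1 + x ^ 2 := Real.sq_sqrt (by positivity)
  have hb2 : b ^ 2 = 1 + lam ^ 2 * x ^ 2 := Real.sq_sqrt (by positivity)
  have hapos : 0 < a := Real.sqrt_pos.mpr (by positivity)
  have hbpos : 0 < b := Real.sqrt_pos.mpr (by positivity)
  have hlab : lam * a ≤ b := by
    have h1 : (lam * a) ^ 2 ≤ b ^ 2 := by nlinarith [sq_nonneg x]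
    nlinarith [mul_pos hl hapos]
  have hord : lam * x / b ≤ x / a := by
    rw [div_le_div_iff₀ hbpos hapos]
    nlinarith
  rw [abs_of_nonpos (by linarith), neg_sub, ← hb2]
  rw [div_sub_div _ _ hapos.ne' hbpos.ne']
  have hnum : 0 ≤ x * b - lam * x * a := by nlinarith
  rw [show 1 / 2 * (x / (a * b ^ 2) * (1 - lam ^ 2)) = x * (1 - lam ^ 2) / (2 * (a * b ^ 2)) by ring]
  rw [div_le_div_iff₀ (by positivity) (by positivity)]
  -- need : 1/2 * (x / b * (1-lam^2)) * (a*b) ≤ (x*b - lam*x*a) * ?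
  have key : (x * b - lam * x * a) * (b + lam * a) = x * (1 - lam ^ 2) := by
    linear_combination x * hb2 - lam ^ 2 * x * ha2
  nlinarith [mul_nonneg (mul_nonneg hnum (sub_nonneg.2 hlab)) (mul_pos hapos hbpos).le,
    mul_pos hapos hbpos]
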